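/- If g : {0,...,b-1} → {0,...,b-1} is a nondecreasing function (a digit map), extended to dismal numbers digitwise, then g(m ⊞ n) = g(m) ⊞ g(n) and g(m ⊠ n) = g(m) ⊠ g(n) for all dismal numbers m, n. -/

import Mathlib

/-- The `i`-th base-`b` digit of `n`. -/
def digit (b n i : ℕ) : ℕ := n / b ^ i % b

/-- Dismal addition in base `b`: digitwise maximum of base-`b` digits. -/
def dadd (b m n : ℕ) : ℕ :=
  ∑ i ∈ Finset.range (m + n + 1), max (digit b m i) (digit b n i) * b ^ i

/-- Dismal multiplication in base `b`: digit convolution with `min` as digit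
product and `max` as digit sum (no carries). -/
def dmul (b m n : ℕ) : ℕ :=
  ∑ k ∈ Finset.range (m + n + 1),
    ((Finset.range (k + 1)).sup fun i => min (digit b m i) (digit b n (k - i))) * b ^ k

/-- The number of base-`b` digits of `n`. -/
def dlen (b n : ℕ) : ℕ := (Nat.digits b n).length

/-- Extension of a digit map `g` to a dismal number, applied digitwise. -/
def dmap (b : ℕ) (g : ℕ → ℕ) (n : ℕ) : ℕ :=
  ∑ i ∈ Finset.range (dlen b n), g (digit b n i) * b ^ i

section Aux

variable {b : ℕ}

lemma digit_lt (hb : 2 ≤ b) (n i : ℕ) : digit b n i < b :=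
  Nat.mod_lt _ (by omega)

lemma digit_eq_zero_of_lt {n i : ℕ} (h : n < b ^ i) : digit b n i = 0 := by
  simp [digit, Nat.div_eq_of_lt h]

lemma digit_eq_zero_of_le (hb : 2 ≤ b) {n i : ℕ} (h : n ≤ i) : digit b n i = 0 :=
  digit_eq_zero_of_lt (lt_of_lt_of_le (Nat.lt_pow_self (n := n) (a := b) (by omega))
    (Nat.pow_le_pow_right (by omega) h))

lemma digit_succ (n i : ℕ) : digit b n (i + 1) = digit b (n / b) i := by
  simp [digit, pow_succ, Nat.div_div_eq_div_mul, mul_comm]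

lemma digit_sum (hb : 2 ≤ b) (c : ℕ → ℕ) (hc : ∀ i, c i < b) (N : ℕ) :
    ∀ j, digit b (∑ i ∈ Finset.range N, c i * b ^ i) j = if j < N then c j else 0 := by
  induction N generalizing c with
  | zero => intro j; simp [digit]
  | succ N ih =>
    have hsum : ∑ i ∈ Finset.range (N + 1), c i * b ^ i
        = c 0 + b * ∑ i ∈ Finset.range N, c (i + 1) * b ^ i := by
      rw [Finset.sum_range_succ']
      simp only [pow_succ, Finset.mul_sum, pow_zero, mul_one]
      rw [add_comm]
      congr 1
      apply Finset.sum_congr rfl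
      intro i _
      ring
    intro j
    cases j with
    | zero =>
      rw [hsum]
      simp [digit, Nat.add_mul_mod_self_left, Nat.mod_eq_of_lt (hc 0)]
    | succ j =>
      rw [hsum, digit_succ]
      have hdiv : (c 0 + b * ∑ i ∈ Finset.range N, c (i + 1) * b ^ i) / b
          = ∑ i ∈ Finset.range N, c (i + 1) * b ^ i := by
        rw [Nat.add_mul_div_left _ _ (by omega : 0 < b), Nat.div_eq_of_lt (hc 0), Nat.zero_add]
      rw [hdiv, ih (fun i => c (i + 1)) (fun i => hc (i + 1)) j]
      simp [Nat.succ_lt_succ_iff]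

lemma sum_lt_pow (hb : 2 ≤ b) (c : ℕ → ℕ) (hc : ∀ i, c i < b) (N : ℕ) :
    ∑ i ∈ Finset.range N, c i * b ^ i < b ^ N := by
  induction N generalizing c with
  | zero => simp
  | succ N ih =>
    rw [Finset.sum_range_succ']
    have h1 : ∑ i ∈ Finset.range N, c (i + 1) * b ^ (i + 1)
        = b * ∑ i ∈ Finset.range N, c (i + 1) * b ^ i := by
      rw [Finset.mul_sum]
      apply Finset.sum_congr rfl
      intro i _
      ring
    rw [h1]
    have hS := ih (fun i => c (i + 1)) (fun i => hc (i + 1))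
    have h0 : c 0 < b := hc 0
    calc b * ∑ i ∈ Finset.range N, c (i + 1) * b ^ i + c 0 * b ^ 0
        < b * (∑ i ∈ Finset.range N, c (i + 1) * b ^ i + 1) := by
          simp only [pow_zero, mul_one, Nat.mul_add, Nat.mul_one]
          omega
      _ ≤ b * b ^ N := Nat.mul_le_mul_left b hS
      _ = b ^ (N + 1) := by ring

lemma digit_expansion (hb : 2 ≤ b) :
    ∀ N n, n < b ^ N → n = ∑ i ∈ Finset.range N, digit b n i * b ^ i := by
  intro N
  induction N with
  | zero => intro n h; simpa using Nat.lt_one_iff.mp (by simpa using h)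
  | succ N ih =>
    intro n h
    rw [Finset.sum_range_succ']
    have h1 : ∀ i, digit b n (i + 1) * b ^ (i + 1) = b * (digit b (n / b) i * b ^ i) := by
      intro i; rw [digit_succ]; ring
    simp only [h1]
    rw [← Finset.mul_sum]
    have hdiv : n / b < b ^ N := by
      rw [Nat.div_lt_iff_lt_mul (by omega : 0 < b)]
      calc n < b ^ (N + 1) := h
        _ = b ^ N * b := by ring
    rw [← ih (n / b) hdiv]
    have h2 : digit b n 0 * b ^ 0 = n % b := by simp [digit]
    rw [h2]
    exact (Nat.div_add_mod n b).symm

lemma digit_ext (hb : 2 ≤ b) {x y : ℕ} (h : ∀ i, digit b x i = digit b y i) : x = y := by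
  have hx : x < b ^ max x y := lt_of_lt_of_le (Nat.lt_pow_self (n := x) (a := b) (by omega))
    (Nat.pow_le_pow_right (by omega) (le_max_left x y))
  have hy : y < b ^ max x y := lt_of_lt_of_le (Nat.lt_pow_self (n := y) (a := b) (by omega))
    (Nat.pow_le_pow_right (by omega) (le_max_right x y))
  calc x = ∑ i ∈ Finset.range (max x y), digit b x i * b ^ i := digit_expansion hb _ x hx
    _ = ∑ i ∈ Finset.range (max x y), digit b y i * b ^ i :=
        Finset.sum_congr rfl fun i _ => by rw [h i]
    _ = y := (digit_expansion hb _ y hy).symm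

lemma lt_pow_dlen (hb : 2 ≤ b) (x : ℕ) : x < b ^ dlen b x :=
  Nat.lt_base_pow_length_digits (by omega)

lemma dlen_le_of_lt_pow (hb : 2 ≤ b) {x k : ℕ} (h : x < b ^ k) : dlen b x ≤ k := by
  rcases Nat.eq_zero_or_pos x with rfl | hx
  · simp [dlen]
  · rw [dlen, Nat.digits_len b x (by omega) (by omega)]
    have := Nat.log_lt_of_lt_pow (x := k) (y := x) (by omega) h
    omega

lemma dlen_le_iff (hb : 2 ≤ b) {x k : ℕ} :
    dlen b x ≤ k ↔ ∀ j, k ≤ j → digit b x j = 0 := by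
  constructor
  · intro h j hj
    exact digit_eq_zero_of_lt (lt_of_lt_of_le (lt_pow_dlen hb x)
      (Nat.pow_le_pow_right (by omega) (le_trans h hj)))
  · intro h
    apply dlen_le_of_lt_pow hb
    have hN : x < b ^ max k x := lt_of_lt_of_le (Nat.lt_pow_self (n := x) (a := b) (by omega))
      (Nat.pow_le_pow_right (by omega) (le_max_right k x))
    calc x = ∑ i ∈ Finset.range (max k x), digit b x i * b ^ i := digit_expansion hb _ x hN
      _ = ∑ i ∈ Finset.range k, digit b x i * b ^ i := by
          rw [← Finset.sum_range_add_sum_Ico _ (le_max_left k x)]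
          have hz : ∑ i ∈ Finset.Ico k (max k x), digit b x i * b ^ i = 0 :=
            Finset.sum_eq_zero fun i hi => by
              rw [h i (Finset.mem_Ico.mp hi).1]; ring
          omega
      _ < b ^ k := sum_lt_pow hb _ (fun i => digit_lt hb x i) k

lemma digit_eq_zero_of_dlen_le (hb : 2 ≤ b) {x j : ℕ} (h : dlen b x ≤ j) :
    digit b x j = 0 :=
  (dlen_le_iff hb).mp le_rfl j h

lemma one_le_dlen {x : ℕ} (hx : x ≠ 0) : 1 ≤ dlen b x :=
  List.length_pos_iff.mpr (Nat.digits_ne_nil_iff_ne_zero.mpr hx)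

lemma top_digit_ne_zero (hb : 2 ≤ b) {x : ℕ} (hx : x ≠ 0) :
    digit b x (dlen b x - 1) ≠ 0 := by
  have h1 : 1 ≤ dlen b x := one_le_dlen hx
  intro h0
  have hall : ∀ j, dlen b x - 1 ≤ j → digit b x j = 0 := by
    intro j hj
    rcases Nat.lt_or_ge j (dlen b x) with h | h
    · have : j = dlen b x - 1 := by omega
      rwa [this]
    · exact digit_eq_zero_of_dlen_le hb h
  have := (dlen_le_iff hb).mpr hall
  omega

lemma digit_dadd (hb : 2 ≤ b) (m n j : ℕ) :
    digit b (dadd b m n) j = max (digit b m j) (digit b n j) := by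
  rw [dadd, digit_sum hb _ (fun i => max_lt (digit_lt hb m i) (digit_lt hb n i)) _ j]
  split
  · rfl
  · next h =>
    rw [digit_eq_zero_of_le hb (show m ≤ j by omega),
        digit_eq_zero_of_le hb (show n ≤ j by omega)]
    simp

lemma digit_dmul (hb : 2 ≤ b) (m n k : ℕ) :
    digit b (dmul b m n) k
      = (Finset.range (k + 1)).sup fun i => min (digit b m i) (digit b n (k - i)) := by
  have hlt : ∀ k, ((Finset.range (k + 1)).sup fun i =>
      min (digit b m i) (digit b n (k - i))) < b := by
    intro k
    refine (Finset.sup_lt_iff (show (⊥ : ℕ) < b by simpa using by omega)).mpr ?_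
    intro i _
    exact lt_of_le_of_lt (min_le_left _ _) (digit_lt hb m i)
  rw [dmul, digit_sum hb _ hlt _ k]
  split
  · rfl
  · next h =>
    symm
    apply Nat.eq_zero_of_le_zero
    apply Finset.sup_le
    intro i hi
    have hik : i < k + 1 := Finset.mem_range.mp hi
    rcases Nat.lt_or_ge i m with him | him
    · rw [digit_eq_zero_of_le hb (show n ≤ k - i by omega)]
      simp
    · rw [digit_eq_zero_of_le hb him]
      simp

lemma digit_dmap (hb : 2 ≤ b) (g : ℕ → ℕ) (hrange : ∀ i, i < b → g i < b) (x j : ℕ) :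
    digit b (dmap b g x) j = if j < dlen b x then g (digit b x j) else 0 := by
  rw [dmap, digit_sum hb _ (fun i => hrange _ (digit_lt hb x i)) _ j]

lemma dmap_zero (g : ℕ → ℕ) : dmap b g 0 = 0 := by
  simp [dmap, dlen]

lemma dmul_zero_left (n : ℕ) : dmul b 0 n = 0 := by
  rw [dmul]
  apply Finset.sum_eq_zero
  intro k _
  have h : ((Finset.range (k + 1)).sup fun i => min (digit b 0 i) (digit b n (k - i))) = 0 := by
    apply Nat.eq_zero_of_le_zero
    apply Finset.sup_le
    intro i _
    simp [digit]
  rw [h, Nat.zero_mul]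

lemma dmul_zero_right (m : ℕ) : dmul b m 0 = 0 := by
  rw [dmul]
  apply Finset.sum_eq_zero
  intro k _
  have h : ((Finset.range (k + 1)).sup fun i => min (digit b m i) (digit b 0 (k - i))) = 0 := by
    apply Nat.eq_zero_of_le_zero
    apply Finset.sup_le
    intro i _
    simp [digit]
  rw [h, Nat.zero_mul]

lemma dlen_dadd (hb : 2 ≤ b) (m n : ℕ) :
    dlen b (dadd b m n) = max (dlen b m) (dlen b n) := by
  apply le_antisymm
  · apply (dlen_le_iff hb).mpr
    intro j hj
    rw [digit_dadd hb,
        digit_eq_zero_of_dlen_le hb (le_trans (le_max_left _ _) hj),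
        digit_eq_zero_of_dlen_le hb (le_trans (le_max_right _ _) hj)]
    simp
  · apply max_le <;>
      (apply (dlen_le_iff hb).mpr; intro j hj;
       have h := digit_eq_zero_of_dlen_le hb hj;
       rw [digit_dadd hb] at h; omega)

variable {g : ℕ → ℕ}

lemma g_max (hmono : ∀ i j, i ≤ j → j < b → g i ≤ g j) {x y : ℕ}
    (hx : x < b) (hy : y < b) : g (max x y) = max (g x) (g y) := by
  rcases le_total x y with h | h
  · rw [max_eq_right h, max_eq_right (hmono x y h hy)]
  · rw [max_eq_left h, max_eq_left (hmono y x h hx)]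

lemma g_min (hmono : ∀ i j, i ≤ j → j < b → g i ≤ g j) {x y : ℕ}
    (hx : x < b) (hy : y < b) : g (min x y) = min (g x) (g y) := by
  rcases le_total x y with h | h
  · rw [min_eq_left h, min_eq_left (hmono x y h hy)]
  · rw [min_eq_right h, min_eq_right (hmono y x h hx)]

lemma g_sup (hb : 2 ≤ b) (hmono : ∀ i j, i ≤ j → j < b → g i ≤ g j)
    {s : Finset ℕ} (hs : s.Nonempty) (f : ℕ → ℕ) (hf : ∀ i ∈ s, f i < b) :
    g (s.sup f) = s.sup fun i => g (f i) := by
  induction hs using Finset.Nonempty.cons_induction with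
  | singleton a => simp
  | cons a s ha hs ih =>
    rw [Finset.sup_cons, Finset.sup_cons]
    have h1 : f a < b := hf a (Finset.mem_cons_self a s)
    have h2 : s.sup f < b := by
      refine (Finset.sup_lt_iff (show (⊥ : ℕ) < b by simpa using by omega)).mpr ?_
      intro i hi
      exact hf i (Finset.mem_cons.mpr (Or.inr hi))
    rw [show f a ⊔ s.sup f = max (f a) (s.sup f) from rfl,
        g_max hmono h1 h2, ih fun i hi => hf i (Finset.mem_cons.mpr (Or.inr hi))]

end Aux

/-- a nondecreasing digit map commutes with dismal addition and
dismal multiplication. -/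
theorem dismal_digit_map (b : ℕ) (hb : 2 ≤ b) (g : ℕ → ℕ)
    (hrange : ∀ i, i < b → g i < b)
    (hmono : ∀ i j, i ≤ j → j < b → g i ≤ g j) (m n : ℕ) :
    dmap b g (dadd b m n) = dadd b (dmap b g m) (dmap b g n) ∧
    dmap b g (dmul b m n) = dmul b (dmap b g m) (dmap b g n) := by
  constructor
  · -- addition
    apply digit_ext hb
    intro j
    rw [digit_dmap hb g hrange, digit_dadd hb, digit_dadd hb,
        digit_dmap hb g hrange, digit_dmap hb g hrange, dlen_dadd hb]
    by_cases h1 : j < dlen b m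
    · by_cases h2 : j < dlen b n
      · rw [if_pos (lt_max_iff.mpr (Or.inl h1)), if_pos h1, if_pos h2,
            g_max hmono (digit_lt hb m j) (digit_lt hb n j)]
      · rw [if_pos (lt_max_iff.mpr (Or.inl h1)), if_pos h1, if_neg h2,
            digit_eq_zero_of_dlen_le hb (not_lt.mp h2)]
        simp
    · by_cases h2 : j < dlen b n
      · rw [if_pos (lt_max_iff.mpr (Or.inr h2)), if_neg h1, if_pos h2,
            digit_eq_zero_of_dlen_le hb (not_lt.mp h1)]
        simp
      · rw [if_neg h1, if_neg h2,
            if_neg (not_lt.mpr (max_le (not_lt.mp h1) (not_lt.mp h2)))]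
        simp
  · -- multiplication
    rcases Nat.eq_zero_or_pos m with rfl | hm
    · rw [dmul_zero_left, dmap_zero, dmul_zero_left]
    rcases Nat.eq_zero_or_pos n with rfl | hn
    · rw [dmul_zero_right, dmap_zero, dmul_zero_right]
    have hLm : 1 ≤ dlen b m := one_le_dlen (by omega)
    have hLn : 1 ≤ dlen b n := one_le_dlen (by omega)
    -- upper bound on length of the product
    have hLle : dlen b (dmul b m n) ≤ dlen b m + dlen b n - 1 := by
      apply (dlen_le_iff hb).mpr
      intro k hk
      rw [digit_dmul hb]
      apply Nat.eq_zero_of_le_zero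
      apply Finset.sup_le
      intro i _
      rcases Nat.lt_or_ge i (dlen b m) with h | h
      · rw [digit_eq_zero_of_dlen_le hb (show dlen b n ≤ k - i by omega)]
        simp
      · rw [digit_eq_zero_of_dlen_le hb h]
        simp
    -- lower bound on length of the product
    have htopm := top_digit_ne_zero hb (show m ≠ 0 by omega)
    have htopn := top_digit_ne_zero hb (show n ≠ 0 by omega)
    have hdig : digit b (dmul b m n) (dlen b m + dlen b n - 2) ≠ 0 := by
      rw [digit_dmul hb]
      have hsub : (dlen b m + dlen b n - 2) - (dlen b m - 1) = dlen b n - 1 := by omega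
      have h1 : min (digit b m (dlen b m - 1)) (digit b n (dlen b n - 1))
          ≤ (Finset.range ((dlen b m + dlen b n - 2) + 1)).sup
            fun i => min (digit b m i) (digit b n ((dlen b m + dlen b n - 2) - i)) := by
        have h := Finset.le_sup
          (f := fun i => min (digit b m i) (digit b n ((dlen b m + dlen b n - 2) - i)))
          (Finset.mem_range.mpr (show dlen b m - 1 < (dlen b m + dlen b n - 2) + 1 by omega))
        simpa [hsub] using h
      intro h0
      rw [h0] at h1
      have h2 : 0 < min (digit b m (dlen b m - 1)) (digit b n (dlen b n - 1)) :=
        lt_min (Nat.pos_of_ne_zero htopm) (Nat.pos_of_ne_zero htopn)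
      omega
    have hLge : dlen b m + dlen b n - 1 ≤ dlen b (dmul b m n) := by
      by_contra hc
      push_neg at hc
      exact hdig (digit_eq_zero_of_dlen_le hb (by omega))
    apply digit_ext hb
    intro k
    rw [digit_dmap hb g hrange, digit_dmul hb, digit_dmul hb]
    simp only [digit_dmap hb g hrange]
    by_cases hk : k < dlen b m + dlen b n - 1
    · rw [if_pos (show k < dlen b (dmul b m n) by omega)]
      rw [g_sup hb hmono Finset.nonempty_range_add_one _
        (fun i _ => lt_of_le_of_lt (min_le_left _ _) (digit_lt hb m i))]
      -- witness index giving g 0 ≤ RHS sup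
      have hw : g 0 ≤ (Finset.range (k + 1)).sup fun i =>
          min (if i < dlen b m then g (digit b m i) else 0)
              (if k - i < dlen b n then g (digit b n (k - i)) else 0) := by
        have hi1 : min k (dlen b m - 1) < dlen b m := by omega
        have hi2 : k - min k (dlen b m - 1) < dlen b n := by omega
        refine le_trans ?_ (Finset.le_sup (Finset.mem_range.mpr
          (show min k (dlen b m - 1) < k + 1 by omega)))
        rw [if_pos hi1, if_pos hi2]
        exact le_min (hmono 0 _ (Nat.zero_le _) (digit_lt hb m _))
          (hmono 0 _ (Nat.zero_le _) (digit_lt hb n _))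
      apply le_antisymm
      · apply Finset.sup_le
        intro i hi
        rw [g_min hmono (digit_lt hb m i) (digit_lt hb n (k - i))]
        by_cases h1 : i < dlen b m
        · by_cases h2 : k - i < dlen b n
          · have h := Finset.le_sup
              (f := fun i => min (if i < dlen b m then g (digit b m i) else 0)
                (if k - i < dlen b n then g (digit b n (k - i)) else 0)) hi
            simpa [h1, h2] using h
          · refine le_trans ?_ hw
            rw [digit_eq_zero_of_dlen_le hb (not_lt.mp h2)]
            exact min_le_right _ _
        · refine le_trans ?_ hw
          rw [digit_eq_zero_of_dlen_le hb (not_lt.mp h1)]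
          exact min_le_left _ _
      · apply Finset.sup_le
        intro i hi
        refine le_trans ?_ (Finset.le_sup (f := fun i =>
          g (min (digit b m i) (digit b n (k - i)))) hi)
        show _ ≤ g (min (digit b m i) (digit b n (k - i)))
        rw [g_min hmono (digit_lt hb m i) (digit_lt hb n (k - i))]
        apply min_le_min <;> (split
                              · exact le_rfl
                              · exact Nat.zero_le _)
    · rw [if_neg (show ¬ k < dlen b (dmul b m n) by omega)]
      symm
      apply Nat.eq_zero_of_le_zero
      apply Finset.sup_le
      intro i _
      rcases Nat.lt_or_ge i (dlen b m) with h | h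
      · rw [if_neg (show ¬ k - i < dlen b n by omega)]
        simp
      · rw [if_neg (not_lt.mpr h)]
        simp
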